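/- The free associative algebra K⟨X⟩ over a commutative field K is a similarity unique factorization domain: it is atomic, and whenever p₁p₂⋯p_m = q₁q₂⋯q_n with all p_i, q_j atoms, then m = n and there is a permutation σ of {1,…,m} such that p_i is similar to q_{σ(i)} for all i. -/

import Mathlib

/-- Two elements of a ring are similar if the quotients by the right ideals
they generate are isomorphic as right modules. -/
def SimilarElements {R : Type*} [Ring R] (p q : R) : Prop :=
  Nonempty ((R ⧸ Submodule.span Rᵐᵒᵖ ({p} : Set R)) ≃ₗ[Rᵐᵒᵖ]
            (R ⧸ Submodule.span Rᵐᵒᵖ ({q} : Set R)))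


open Submodule MulOpposite

section Sim
variable {R : Type*} [Ring R]

theorem mem_rspan_iff (p x : R) :
    x ∈ Submodule.span Rᵐᵒᵖ ({p} : Set R) ↔ ∃ r : R, x = p * r := by
  rw [Submodule.mem_span_singleton]
  constructor
  · rintro ⟨r, rfl⟩; exact ⟨r.unop, (MulOpposite.smul_eq_mul_unop _ _).symm⟩
  · rintro ⟨r, rfl⟩; exact ⟨MulOpposite.op r, MulOpposite.smul_eq_mul_unop _ _⟩

theorem isUnit_of_mul_eq_one_left' [Nontrivial R] [NoZeroDivisors R] {a b : R}
    (h : a * b = 1) : IsUnit a := by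
  have hb : b ≠ 0 := by rintro rfl; rw [mul_zero] at h; exact one_ne_zero h.symm
  have hba : b * a = 1 := by
    have : (b * a - 1) * b = 0 := by
      rw [sub_mul, one_mul, mul_assoc, h, mul_one, sub_self]
    rcases mul_eq_zero.mp this with h1 | h1
    · rwa [sub_eq_zero] at h1
    · exact absurd h1 hb
  exact ⟨⟨a, b, h, hba⟩, rfl⟩

theorem isUnit_of_mul_eq_one_right' [Nontrivial R] [NoZeroDivisors R] {a b : R}
    (h : a * b = 1) : IsUnit b := by
  have ha : a ≠ 0 := by rintro rfl; rw [zero_mul] at h; exact one_ne_zero h.symm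
  have hba : b * a = 1 := by
    have : a * (b * a - 1) = 0 := by
      rw [mul_sub, mul_one, ← mul_assoc, h, one_mul, sub_self]
    rcases mul_eq_zero.mp this with h1 | h1
    · exact absurd h1 ha
    · rwa [sub_eq_zero] at h1
  exact ⟨⟨b, a, hba, h⟩, rfl⟩

theorem similar_refl (p : R) : SimilarElements p p := ⟨LinearEquiv.refl _ _⟩

theorem similar_symm {p q : R} (h : SimilarElements p q) : SimilarElements q p :=
  ⟨h.some.symm⟩

theorem similar_trans {p q r : R} (h1 : SimilarElements p q) (h2 : SimilarElements q r) :
    SimilarElements p r := ⟨h1.some.trans h2.some⟩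

theorem rspan_mul_unit {p w : R} (hw : IsUnit w) :
    Submodule.span Rᵐᵒᵖ ({p * w} : Set R) = Submodule.span Rᵐᵒᵖ ({p} : Set R) := by
  obtain ⟨u, rfl⟩ := hw
  apply le_antisymm
  · rw [Submodule.span_le, Set.singleton_subset_iff, SetLike.mem_coe, mem_rspan_iff]
    exact ⟨u, rfl⟩
  · rw [Submodule.span_le, Set.singleton_subset_iff, SetLike.mem_coe, mem_rspan_iff]
    exact ⟨(↑u⁻¹ : R), by rw [mul_assoc, Units.mul_inv, mul_one]⟩

/-- p is similar to p * w for a unit w. -/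
theorem similar_mul_unit {p w : R} (hw : IsUnit w) : SimilarElements p (p * w) :=
  ⟨Submodule.quotEquivOfEq _ _ (rspan_mul_unit hw).symm⟩

/-- p is similar to u * p for a unit u. -/
theorem similar_unit_mul {p : R} {u : R} (hu : IsUnit u) : SimilarElements p (u * p) := by
  obtain ⟨v, rfl⟩ := hu
  let e : R ≃ₗ[Rᵐᵒᵖ] R :=
    { toFun := fun x => (v : R) * x
      invFun := fun x => (↑v⁻¹ : R) * x
      map_add' := fun x y => mul_add _ _ _
      map_smul' := fun r x => by
        simp only [RingHom.id_apply, MulOpposite.smul_eq_mul_unop, mul_assoc]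
      left_inv := fun x => by dsimp only; rw [← mul_assoc, Units.inv_mul, one_mul]
      right_inv := fun x => by dsimp only; rw [← mul_assoc, Units.mul_inv, one_mul] }
  refine ⟨Submodule.Quotient.equiv _ _ e ?_⟩
  rw [Submodule.map_span, Set.image_singleton]
  rfl

/-- The comaximal transposition lemma: if p*s = q*t, p,q are right comaximal, and
(s,t) generates the relation module, then s is similar to q. -/
theorem similar_of_comaximal {p q s t u v : R}
    (hrel : p * s = q * t) (hco : p * u + q * v = 1)
    (hker : ∀ x y : R, p * x = q * y → ∃ r : R, x = s * r ∧ y = t * r) :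
    SimilarElements s q := by
  classical
  let f : R →ₗ[Rᵐᵒᵖ] R ⧸ Submodule.span Rᵐᵒᵖ ({q} : Set R) :=
    { toFun := fun x => Submodule.Quotient.mk (p * x)
      map_add' := fun x y => by rw [mul_add]; rfl
      map_smul' := fun r x => by
        rw [RingHom.id_apply, MulOpposite.smul_eq_mul_unop, ← mul_assoc,
          ← MulOpposite.smul_eq_mul_unop, Submodule.Quotient.mk_smul] }
  have hsurj : Function.Surjective f := by
    intro w
    obtain ⟨x, rfl⟩ := Submodule.Quotient.mk_surjective _ w
    refine ⟨u * x, ?_⟩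
    show Submodule.Quotient.mk (p * (u * x)) = Submodule.Quotient.mk x
    rw [Submodule.Quotient.eq]
    rw [mem_rspan_iff]
    have hx : p * (u * x) + q * (v * x) = x := by
      rw [← mul_assoc, ← mul_assoc, ← add_mul, hco, one_mul]
    refine ⟨-(v * x), ?_⟩
    rw [mul_neg]
    set A := p * (u * x) with hA
    set B := q * (v * x) with hB
    rw [← hx]
    abel
  have hker' : LinearMap.ker f = Submodule.span Rᵐᵒᵖ ({s} : Set R) := by
    ext x
    rw [LinearMap.mem_ker, mem_rspan_iff]
    constructor
    · intro hx
      have : Submodule.Quotient.mk (p := Submodule.span Rᵐᵒᵖ ({q} : Set R)) (p * x) = 0 := hx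
      rw [Submodule.Quotient.mk_eq_zero, mem_rspan_iff] at this
      obtain ⟨y, hy⟩ := this
      obtain ⟨r, hr, _⟩ := hker x y hy
      exact ⟨r, hr⟩
    · rintro ⟨r, rfl⟩
      show Submodule.Quotient.mk (p * (s * r)) = 0
      rw [Submodule.Quotient.mk_eq_zero, mem_rspan_iff]
      exact ⟨t * r, by rw [← mul_assoc, ← mul_assoc, hrel]⟩
  exact ⟨(Submodule.quotEquivOfEq _ _ hker'.symm).trans (f.quotKerEquivOfSurjective hsurj)⟩

end Sim
section SimPerm
variable {R : Type*} [Ring R]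

/-- Lists paired up to permutation and similarity. -/
def SimPerm (L M : List R) : Prop :=
  ∃ σ : Fin L.length ≃ Fin M.length, ∀ i, SimilarElements (L.get i) (M.get (σ i))

theorem simPerm_nil : SimPerm ([] : List R) [] :=
  ⟨Equiv.refl _, fun i => i.elim0⟩

theorem simPerm_refl (L : List R) : SimPerm L L :=
  ⟨Equiv.refl _, fun i => similar_refl _⟩

theorem simPerm_length {L M : List R} (h : SimPerm L M) : L.length = M.length := by
  obtain ⟨σ, -⟩ := h
  simpa using Fintype.card_congr σ

theorem simPerm_symm {L M : List R} (h : SimPerm L M) : SimPerm M L := by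
  obtain ⟨σ, hσ⟩ := h
  refine ⟨σ.symm, fun i => ?_⟩
  have := hσ (σ.symm i)
  rw [Equiv.apply_symm_apply] at this
  exact similar_symm this

theorem simPerm_trans {L M N : List R} (h1 : SimPerm L M) (h2 : SimPerm M N) :
    SimPerm L N := by
  obtain ⟨σ, hσ⟩ := h1
  obtain ⟨τ, hτ⟩ := h2
  exact ⟨σ.trans τ, fun i => similar_trans (hσ i) (hτ (σ i))⟩

theorem simPerm_cons {p q : R} {L M : List R} (h : SimilarElements p q)
    (h2 : SimPerm L M) : SimPerm (p :: L) (q :: M) := by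
  obtain ⟨σ, hσ⟩ := h2
  refine ⟨(finSuccEquiv _).trans ((Equiv.optionCongr σ).trans (finSuccEquiv _).symm), fun i => ?_⟩
  induction i using Fin.cases with
  | zero => simpa using h
  | succ j => simpa using hσ j

theorem simPerm_swap (a b : R) (l : List R) : SimPerm (a :: b :: l) (b :: a :: l) := by
  classical
  let f : Fin (l.length + 2) → Fin (l.length + 2) := fun i =>
    if i.1 = 0 then ⟨1, by omega⟩ else if i.1 = 1 then ⟨0, by omega⟩ else i
  have hf : ∀ i, f (f i) = i := by
    rintro ⟨(_ | _ | k), hi⟩ <;> simp [f]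
  refine ⟨(⟨f, f, hf, hf⟩ : Fin (l.length + 2) ≃ Fin (l.length + 2)), fun i => ?_⟩
  rcases i with ⟨(_ | _ | k), hi⟩ <;>
    simp [f, List.get_eq_getElem, Equiv.coe_fn_mk] <;>
    exact similar_refl _

end SimPerm

section Deg
variable {R : Type*} [Ring R]

/-- A degree function witnessing that `R` behaves like a free algebra. -/
structure DegreeSystem (R : Type*) [Ring R] : Type _ where
  deg : R → ℕ
  deg_mul : ∀ a b : R, a ≠ 0 → b ≠ 0 → deg (a * b) = deg a + deg b
  isUnit_of_deg : ∀ a : R, a ≠ 0 → deg a = 0 → IsUnit a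
  div : ∀ a b x y : R, a * x = b * y → a * x ≠ 0 → deg b ≤ deg a →
    ∃ c, a - b * c = 0 ∨ deg (a - b * c) < deg a

variable [Nontrivial R] [NoZeroDivisors R]

theorem DegreeSystem.deg_one (D : DegreeSystem R) : D.deg 1 = 0 := by
  have := D.deg_mul 1 1 one_ne_zero one_ne_zero
  rw [mul_one] at this
  omega

theorem DegreeSystem.deg_unit (D : DegreeSystem R) {a : R} (ha : IsUnit a) : D.deg a = 0 := by
  obtain ⟨u, rfl⟩ := ha
  have hu : (u : R) ≠ 0 := Units.ne_zero u
  have hu' : ((u⁻¹ : Rˣ) : R) ≠ 0 := Units.ne_zero _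
  have := D.deg_mul (u : R) ((u⁻¹ : Rˣ) : R) hu hu'
  rw [Units.mul_inv, D.deg_one] at this
  omega

theorem DegreeSystem.deg_pos (D : DegreeSystem R) {a : R} (ha : a ≠ 0) (hu : ¬ IsUnit a) : 0 < D.deg a := by
  rcases Nat.eq_zero_or_pos (D.deg a) with h | h
  · exact absurd (D.isUnit_of_deg a ha h) hu
  · exact h

/-- Atomicity. -/
theorem DegreeSystem.factor (D : DegreeSystem R) : ∀ p : R, p ≠ 0 → ¬ IsUnit p →
    ∃ L : List R, (∀ a ∈ L, Irreducible a) ∧ L.prod = p := by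
  suffices H : ∀ n, ∀ p : R, D.deg p ≤ n → p ≠ 0 → ¬ IsUnit p →
      ∃ L : List R, (∀ a ∈ L, Irreducible a) ∧ L.prod = p by
    intro p hp hu; exact H (D.deg p) p le_rfl hp hu
  intro n
  induction n using Nat.strong_induction_on with
  | _ n IH =>
    intro p hdeg hp hu
    by_cases hirr : Irreducible p
    · exact ⟨[p], by simpa using hirr, by simp⟩
    · rw [irreducible_iff] at hirr
      push_neg at hirr
      obtain ⟨a, b, rfl, ha, hb⟩ := hirr hu
      have ha0 : a ≠ 0 := fun h => hp (by rw [h, zero_mul])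
      have hb0 : b ≠ 0 := fun h => hp (by rw [h, mul_zero])
      have hda := D.deg_pos ha0 ha
      have hdb := D.deg_pos hb0 hb
      have hsum := D.deg_mul a b ha0 hb0
      have h1 : 0 < n := by omega
      obtain ⟨La, hLa, hpa⟩ := IH (n - 1) (by omega) a (by omega) ha0 ha
      obtain ⟨Lb, hLb, hpb⟩ := IH (n - 1) (by omega) b (by omega) hb0 hb
      refine ⟨La ++ Lb, ?_, by rw [List.prod_append, hpa, hpb]⟩
      intro x hx
      rcases List.mem_append.mp hx with h | h
      · exact hLa x h
      · exact hLb x h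

/-- The Euclidean/2-fir lemma: two elements with a nonzero common right multiple
have a gcd (generating the sum of the right ideals) and the relation module is cyclic. -/
theorem DegreeSystem.euclid (D : DegreeSystem R) : ∀ a b : R, a ≠ 0 → b ≠ 0 →
    (∃ x y : R, a * x = b * y ∧ a * x ≠ 0) →
    ∃ d a₁ b₁ u v s t : R, a = d * a₁ ∧ b = d * b₁ ∧ a * u + b * v = d ∧
      a * s = b * t ∧ ∀ x y : R, a * x = b * y → ∃ r : R, x = s * r ∧ y = t * r := by
  suffices H : ∀ n, ∀ a b : R, D.deg a + D.deg b ≤ n → a ≠ 0 → b ≠ 0 →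
      (∃ x y : R, a * x = b * y ∧ a * x ≠ 0) →
      ∃ d a₁ b₁ u v s t : R, a = d * a₁ ∧ b = d * b₁ ∧ a * u + b * v = d ∧
        a * s = b * t ∧ ∀ x y : R, a * x = b * y → ∃ r : R, x = s * r ∧ y = t * r by
    intro a b ha hb hcrm; exact H _ a b le_rfl ha hb hcrm
  intro n
  induction n using Nat.strong_induction_on with
  | _ n IH =>
    -- first prove it for the ordered case deg b ≤ deg a
    have ordered : ∀ a b : R, D.deg a + D.deg b ≤ n → D.deg b ≤ D.deg a → a ≠ 0 → b ≠ 0 →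
        (∃ x y : R, a * x = b * y ∧ a * x ≠ 0) →
        ∃ d a₁ b₁ u v s t : R, a = d * a₁ ∧ b = d * b₁ ∧ a * u + b * v = d ∧
          a * s = b * t ∧ ∀ x y : R, a * x = b * y → ∃ r : R, x = s * r ∧ y = t * r := by
      intro a b hn hord ha hb hcrm
      obtain ⟨x₀, y₀, hxy, hne⟩ := hcrm
      obtain ⟨c, hc⟩ := D.div a b x₀ y₀ hxy hne hord
      by_cases h0 : a - b * c = 0
      · -- b divides a
        have hab : a = b * c := by rwa [sub_eq_zero] at h0
        refine ⟨b, c, 1, 0, 1, 1, c, hab, (mul_one b).symm, by rw [mul_zero, mul_one, zero_add],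
          by rw [mul_one, hab], ?_⟩
        intro x y hxy'
        have : b * (c * x) = b * y := by rw [← mul_assoc, ← hab, hxy']
        have hcx : c * x = y := mul_left_cancel₀ hb this
        exact ⟨x, (one_mul x).symm, hcx.symm⟩
      · have hdeg : D.deg (a - b * c) < D.deg a := by
          rcases hc with h | h
          · exact absurd h h0
          · exact h
        set a₂ := a - b * c with ha₂
        have key : a = b * c + a₂ := by rw [ha₂]; abel
        have hx₀ : x₀ ≠ 0 := fun h => hne (by rw [h, mul_zero])
        -- recurse on (b, a₂)
        have ha₂0 : a₂ ≠ 0 := h0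
        have habx : b * (y₀ - c * x₀) = a₂ * x₀ := by
          rw [mul_sub, ha₂, sub_mul, hxy, mul_assoc]
        have hcrm' : ∃ x y : R, b * x = a₂ * y ∧ b * x ≠ 0 :=
          ⟨y₀ - c * x₀, x₀, habx, by rw [habx]; exact mul_ne_zero ha₂0 hx₀⟩
        have hb' : D.deg b + D.deg a₂ < n := by
          have h1 : 0 < D.deg a := by omega
          omega
        obtain ⟨d, b₁', a₁₁, u', v', s', t', hbd, ha₂d, hsum, hrel, hker⟩ :=
          IH (D.deg b + D.deg a₂) hb' b a₂ le_rfl hb ha₂0 hcrm'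
        refine ⟨d, b₁' * c + a₁₁, b₁', v', u' - c * v', t', c * t' + s', ?_, hbd, ?_, ?_, ?_⟩
        · rw [mul_add, ← mul_assoc, ← hbd, ← ha₂d, key]
        · -- a * v' + b * (u' - c * v') = d
          rw [key, mul_sub]
          have : (b * c + a₂) * v' = b * (c * v') + a₂ * v' := by
            rw [add_mul, mul_assoc]
          rw [this]
          set X := b * (c * v')
          rw [← hsum]
          abel
        · -- a * t' = b * (c * t' + s')
          rw [key, add_mul, mul_add, mul_assoc, ← hrel]
        · intro x y hxy'
          have h2 : b * (y - c * x) = a₂ * x := by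
            rw [mul_sub, ha₂, sub_mul, ← hxy', ← mul_assoc]
          obtain ⟨r, hr1, hr2⟩ := hker (y - c * x) x h2
          refine ⟨r, hr2, ?_⟩
          have : y = c * x + s' * r := by rw [← hr1]; abel
          rw [this, hr2, add_mul, ← mul_assoc]
    -- now combine
    intro a b hn ha hb hcrm
    by_cases hord : D.deg b ≤ D.deg a
    · exact ordered a b hn hord ha hb hcrm
    · obtain ⟨x₀, y₀, hxy, hne⟩ := hcrm
      have hcrm' : ∃ x y : R, b * x = a * y ∧ b * x ≠ 0 := ⟨y₀, x₀, hxy.symm, hxy ▸ hne⟩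
      obtain ⟨d, b₁, a₁, u, v, s, t, hbd, had, hsum, hrel, hker⟩ :=
        ordered b a (by omega) (by omega) hb ha hcrm'
      refine ⟨d, a₁, b₁, v, u, t, s, had, hbd, by rw [← hsum]; abel, hrel.symm, ?_⟩
      intro x y hxy'
      obtain ⟨r, hr1, hr2⟩ := hker y x hxy'.symm
      exact ⟨r, hr2, hr1⟩

end Deg
section Transfer
variable {R : Type*} [Ring R] [Nontrivial R] [NoZeroDivisors R]

theorem rspan_unit_top {q : R} (hq : IsUnit q) :
    Submodule.span Rᵐᵒᵖ ({q} : Set R) = ⊤ := by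
  obtain ⟨w, rfl⟩ := hq
  rw [eq_top_iff]
  intro x _
  rw [mem_rspan_iff]
  exact ⟨(↑w⁻¹ : R) * x, by rw [← mul_assoc, Units.mul_inv, one_mul]⟩

theorem isUnit_of_quot_subsingleton {p : R}
    (h : Subsingleton (R ⧸ Submodule.span Rᵐᵒᵖ ({p} : Set R))) : IsUnit p := by
  have h1 : (Submodule.Quotient.mk (1 : R) : R ⧸ Submodule.span Rᵐᵒᵖ ({p} : Set R)) = 0 :=
    Subsingleton.elim _ _
  rw [Submodule.Quotient.mk_eq_zero, mem_rspan_iff] at h1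
  obtain ⟨r, hr⟩ := h1
  exact isUnit_of_mul_eq_one_left' hr.symm

theorem similar_ne_zero {p q : R} (h : SimilarElements p q) (hp : p ≠ 0) : q ≠ 0 := by
  rintro rfl
  obtain ⟨φ⟩ := h
  have hspan : Submodule.span Rᵐᵒᵖ ({(0 : R)} : Set R) = ⊥ := Submodule.span_zero_singleton _
  let g := φ.trans (Submodule.quotEquivOfEqBot _ hspan)
  set a := g (Submodule.Quotient.mk 1) with ha
  have hg : ∀ x : R, g (Submodule.Quotient.mk x) = a * x := by
    intro x
    have hx : (Submodule.Quotient.mk x : R ⧸ Submodule.span Rᵐᵒᵖ ({p} : Set R)) =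
        MulOpposite.op x • Submodule.Quotient.mk 1 := by
      rw [← Submodule.Quotient.mk_smul, MulOpposite.smul_eq_mul_unop, MulOpposite.unop_op,
        one_mul]
    rw [hx, map_smul, MulOpposite.smul_eq_mul_unop, MulOpposite.unop_op, ← ha]
  have hsurj : Function.Surjective (fun x : R => a * x) := by
    intro y
    obtain ⟨z, hz⟩ := g.surjective y
    obtain ⟨x, rfl⟩ := Submodule.Quotient.mk_surjective _ z
    exact ⟨x, by show a * x = y; rw [← hg x, hz]⟩
  obtain ⟨x, hx⟩ := hsurj 1
  have hunit : IsUnit a := isUnit_of_mul_eq_one_left' hx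
  have hpz : g (Submodule.Quotient.mk p) = 0 := by
    have : (Submodule.Quotient.mk p : R ⧸ Submodule.span Rᵐᵒᵖ ({p} : Set R)) = 0 := by
      rw [Submodule.Quotient.mk_eq_zero]
      exact Submodule.mem_span_singleton_self p
    rw [this, map_zero]
  rw [hg p] at hpz
  rcases mul_eq_zero.mp hpz with h' | h'
  · exact hunit.ne_zero h'
  · exact hp h'

theorem isUnit_left_of_isUnit_mul {a b : R} (h : IsUnit (a * b)) : IsUnit a := by
  obtain ⟨w, hw⟩ := h
  have : a * (b * (↑w⁻¹ : R)) = 1 := by rw [← mul_assoc, ← hw, Units.mul_inv]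
  exact isUnit_of_mul_eq_one_left' this

theorem isUnit_right_of_isUnit_mul {a b : R} (h : IsUnit (a * b)) : IsUnit b := by
  obtain ⟨w, hw⟩ := h
  have : ((↑w⁻¹ : R) * a) * b = 1 := by rw [mul_assoc, ← hw, Units.inv_mul]
  exact isUnit_of_mul_eq_one_right' this

theorem irreducible_unit_mul {u p : R} (hu : IsUnit u) (hp : Irreducible p) :
    Irreducible (u * p) := by
  obtain ⟨w, rfl⟩ := hu
  constructor
  · intro h
    exact hp.not_isUnit (isUnit_right_of_isUnit_mul h)
  · intro a b hab
    have hp' : p = ((↑w⁻¹ : R) * a) * b := by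
      rw [mul_assoc, ← hab, ← mul_assoc, Units.inv_mul, one_mul]
    rcases hp.isUnit_or_isUnit hp' with h | h
    · left
      have : a = (w : R) * ((↑w⁻¹ : R) * a) := by rw [← mul_assoc, Units.mul_inv, one_mul]
      rw [this]
      exact (Units.isUnit w).mul h
    · right; exact h

theorem irreducible_mul_unit {p u : R} (hu : IsUnit u) (hp : Irreducible p) :
    Irreducible (p * u) := by
  obtain ⟨w, rfl⟩ := hu
  constructor
  · intro h
    exact hp.not_isUnit (isUnit_left_of_isUnit_mul h)
  · intro a b hab
    have hp' : p = a * (b * (↑w⁻¹ : R)) := by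
      rw [← mul_assoc, ← hab, mul_assoc, Units.mul_inv, mul_one]
    rcases hp.isUnit_or_isUnit hp' with h | h
    · left; exact h
    · right
      have : b = (b * (↑w⁻¹ : R)) * (w : R) := by rw [mul_assoc, Units.inv_mul, mul_one]
      rw [this]
      exact h.mul (Units.isUnit w)

theorem irreducible_ne_zero' {p : R} (hp : Irreducible p) : p ≠ 0 := by
  rintro rfl
  have := hp.isUnit_or_isUnit (p := (0 : R)) (a := 0) (b := 0) (by rw [zero_mul])
  rcases this with h | h <;> exact hp.not_isUnit h

/-- Similarity preserves irreducibility (uses the 2-fir property). -/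
theorem irreducible_of_similar (D : DegreeSystem R) {p q : R}
    (hp : Irreducible p) (hsim : SimilarElements p q) : Irreducible q := by
  obtain ⟨φ⟩ := hsim
  have hp0 : p ≠ 0 := irreducible_ne_zero' hp
  have hq0 : q ≠ 0 := similar_ne_zero ⟨φ⟩ hp0
  constructor
  · intro hq
    have : Submodule.span Rᵐᵒᵖ ({q} : Set R) = ⊤ := rspan_unit_top hq
    have hsub : Subsingleton (R ⧸ Submodule.span Rᵐᵒᵖ ({q} : Set R)) := by
      rw [Submodule.Quotient.subsingleton_iff]
      exact this
    have : Subsingleton (R ⧸ Submodule.span Rᵐᵒᵖ ({p} : Set R)) :=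
      φ.toEquiv.subsingleton
    exact hp.not_isUnit (isUnit_of_quot_subsingleton this)
  · intro a b hab
    by_contra hcon
    push_neg at hcon
    obtain ⟨ha, hb⟩ := hcon
    have ha0 : a ≠ 0 := fun h => hq0 (by rw [hab, h, zero_mul])
    have hb0 : b ≠ 0 := fun h => hq0 (by rw [hab, h, mul_zero])
    obtain ⟨u, hu⟩ := Submodule.Quotient.mk_surjective _ (φ.symm (Submodule.Quotient.mk a))
    -- u is not in pR
    have h1 : u ∉ Submodule.span Rᵐᵒᵖ ({p} : Set R) := by
      intro hmem
      have : φ.symm (Submodule.Quotient.mk a) = 0 := by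
        rw [← hu, Submodule.Quotient.mk_eq_zero]
        exact hmem
      have h2 : (Submodule.Quotient.mk a : R ⧸ Submodule.span Rᵐᵒᵖ ({q} : Set R)) = 0 := by
        have := congrArg φ this
        rwa [LinearEquiv.apply_symm_apply, map_zero] at this
      rw [Submodule.Quotient.mk_eq_zero, mem_rspan_iff] at h2
      obtain ⟨z, hz⟩ := h2
      -- a = q z = a b z, so b z is... gives 1 = b * z, b unit
      have : a * 1 = a * (b * z) := by
        rw [mul_one]
        conv_lhs => rw [hz, hab]
        rw [mul_assoc]
      have hbz := mul_left_cancel₀ ha0 this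
      exact hb (isUnit_of_mul_eq_one_left' hbz.symm)
    have hu0 : u ≠ 0 := fun h => h1 (h ▸ Submodule.zero_mem _)
    -- u * b ∈ pR
    have hub : u * b ∈ Submodule.span Rᵐᵒᵖ ({p} : Set R) := by
      have hmku : (Submodule.Quotient.mk (u * b) :
          R ⧸ Submodule.span Rᵐᵒᵖ ({p} : Set R)) = MulOpposite.op b • Submodule.Quotient.mk u := by
        rw [← Submodule.Quotient.mk_smul, MulOpposite.smul_eq_mul_unop, MulOpposite.unop_op]
      have : φ (Submodule.Quotient.mk (u * b)) = 0 := by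
        rw [hmku, map_smul, hu, LinearEquiv.apply_symm_apply, ← Submodule.Quotient.mk_smul,
          MulOpposite.smul_eq_mul_unop, MulOpposite.unop_op, ← hab,
          Submodule.Quotient.mk_eq_zero]
        exact Submodule.mem_span_singleton_self q
      have h4 : (Submodule.Quotient.mk (u * b) :
          R ⧸ Submodule.span Rᵐᵒᵖ ({p} : Set R)) = 0 := by
        apply φ.injective
        rw [map_zero]
        exact this
      rw [← Submodule.Quotient.mk_eq_zero]
      exact h4
    rw [mem_rspan_iff] at hub
    obtain ⟨w, hw⟩ := hub
    have hub0 : u * b ≠ 0 := mul_ne_zero hu0 hb0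
    obtain ⟨d, u₁, p₁, cu, cv, s, t, hud, hpd, hsum, -, -⟩ :=
      D.euclid u p hu0 hp0 ⟨b, w, hw, hub0⟩
    rcases hp.isUnit_or_isUnit hpd with hd | hp₁
    · -- d is a unit: u generates R/pR, transport to get a unit, contradiction
      obtain ⟨du, hdu⟩ := hd
      have hgen : ∀ z : R, ∃ x : R, (Submodule.Quotient.mk z :
          R ⧸ Submodule.span Rᵐᵒᵖ ({p} : Set R)) = Submodule.Quotient.mk (u * x) := by
        intro z
        have hz : (u * cu + p * cv) * ((↑du⁻¹ : R) * z) = z := by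
          rw [hsum, ← hdu, ← mul_assoc, Units.mul_inv, one_mul]
        refine ⟨cu * ((↑du⁻¹ : R) * z), ?_⟩
        rw [Submodule.Quotient.eq, mem_rspan_iff]
        refine ⟨cv * ((↑du⁻¹ : R) * z), ?_⟩
        set w₂ := (↑du⁻¹ : R) * z with hw₂
        have expand : u * (cu * w₂) + p * (cv * w₂) = z := by
          have h' : (u * cu + p * cv) * w₂ = z := hz
          rw [← h', add_mul, mul_assoc, mul_assoc]
        set A := u * (cu * w₂)
        set B := p * (cv * w₂)
        rw [← expand]
        abel
      -- transport: mk a generates R/qR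
      obtain ⟨z₁, hz₁⟩ := Submodule.Quotient.mk_surjective _
        (φ.symm (Submodule.Quotient.mk (1 : R)))
      obtain ⟨x, hx⟩ := hgen z₁
      have : (Submodule.Quotient.mk (1 : R) : R ⧸ Submodule.span Rᵐᵒᵖ ({q} : Set R)) =
          Submodule.Quotient.mk (a * x) := by
        have e1 := congrArg φ (hz₁ ▸ hx :
          φ.symm (Submodule.Quotient.mk (1 : R)) = Submodule.Quotient.mk (u * x))
        rw [LinearEquiv.apply_symm_apply] at e1
        have hmkux : (Submodule.Quotient.mk (u * x) :
            R ⧸ Submodule.span Rᵐᵒᵖ ({p} : Set R)) = MulOpposite.op x • Submodule.Quotient.mk u := by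
          rw [← Submodule.Quotient.mk_smul, MulOpposite.smul_eq_mul_unop, MulOpposite.unop_op]
        rw [hmkux, map_smul, hu, LinearEquiv.apply_symm_apply, ← Submodule.Quotient.mk_smul,
          MulOpposite.smul_eq_mul_unop, MulOpposite.unop_op] at e1
        exact e1
      rw [Submodule.Quotient.eq, mem_rspan_iff] at this
      obtain ⟨y, hy⟩ := this
      -- 1 - a x = q y = a (b y), so 1 = a (x + b y): a is a unit, contradiction
      have : a * (x + b * y) = 1 := by
        rw [mul_add, ← mul_assoc, ← hab, ← hy]
        abel
      exact ha (isUnit_of_mul_eq_one_left' this)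
    · -- p₁ is a unit: u ∈ pR, contradiction
      obtain ⟨w₁, hw₁⟩ := hp₁
      have hd : d = p * (↑w₁⁻¹ : R) := by
        rw [hpd, ← hw₁, mul_assoc, Units.mul_inv, mul_one]
      exact h1 (by rw [mem_rspan_iff]; exact ⟨(↑w₁⁻¹ : R) * u₁, by
        rw [hud, hd, mul_assoc]⟩)

theorem irreducible_prod_ne_zero {L : List R} (hL : ∀ a ∈ L, Irreducible a) :
    L.prod ≠ 0 := by
  induction L with
  | nil => simp
  | cons a l IH =>
    rw [List.prod_cons]
    exact mul_ne_zero (irreducible_ne_zero' (hL a (List.mem_cons_self))) 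
      (IH fun x hx => hL x (List.mem_cons_of_mem _ hx))

theorem eq_nil_of_prod_isUnit {L : List R} (hL : ∀ a ∈ L, Irreducible a)
    (h : IsUnit L.prod) : L = [] := by
  cases L with
  | nil => rfl
  | cons a l =>
    rw [List.prod_cons] at h
    exact absurd (isUnit_left_of_isUnit_mul h) (hL a (List.mem_cons_self)).not_isUnit

end Transfer
section Main
variable {R : Type*} [Ring R] [Nontrivial R] [NoZeroDivisors R]

/-- Branch where q = p * w for a unit w. -/
theorem branchA {n : ℕ}
    (IH : ∀ L M : List R, L.length ≤ n → (∀ a ∈ L, Irreducible a) → (∀ a ∈ M, Irreducible a) →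
      L.prod = M.prod → SimPerm L M)
    {p q w : R} {L' M' : List R} (hp : Irreducible p)
    (hL' : ∀ a ∈ L', Irreducible a) (hM' : ∀ a ∈ M', Irreducible a)
    (hw : IsUnit w) (hq : q = p * w)
    (hprod : p * L'.prod = q * M'.prod)
    (hlen : L'.length ≤ n) : SimPerm (p :: L') (q :: M') := by
  have hp0 : p ≠ 0 := irreducible_ne_zero' hp
  have hpq : SimilarElements p q := hq ▸ similar_mul_unit hw
  have hLM : L'.prod = w * M'.prod := by
    apply mul_left_cancel₀ hp0
    rw [hprod, hq, mul_assoc]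
  cases M' with
  | nil =>
    have : L' = [] := by
      apply eq_nil_of_prod_isUnit hL'
      rw [hLM, List.prod_nil, mul_one]
      exact hw
    rw [this]
    exact simPerm_cons hpq simPerm_nil
  | cons q₂ M'' =>
    have hq₂ : Irreducible q₂ := hM' q₂ (List.mem_cons_self)
    have hM'' : ∀ a ∈ M'', Irreducible a := fun a ha => hM' a (List.mem_cons_of_mem _ ha)
    have hprod' : L'.prod = ((w * q₂) :: M'').prod := by
      rw [hLM, List.prod_cons, List.prod_cons, ← mul_assoc]
    have hwq₂ : Irreducible (w * q₂) := irreducible_unit_mul hw hq₂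
    have IH1 : SimPerm L' ((w * q₂) :: M'') := by
      apply IH L' ((w * q₂) :: M'') hlen hL' _ hprod'
      intro a ha
      rcases List.mem_cons.mp ha with h | h
      · rw [h]; exact hwq₂
      · exact hM'' a h
    have c1 : SimPerm (p :: L') (q :: (w * q₂) :: M'') := simPerm_cons hpq IH1
    have c2 : SimPerm (q :: (w * q₂) :: M'') (q :: q₂ :: M'') :=
      simPerm_cons (similar_refl q)
        (simPerm_cons (similar_symm (similar_unit_mul hw)) (simPerm_refl M''))
    exact simPerm_trans c1 c2

/-- Branch where p = q * w for a unit w. -/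
theorem branchB {n : ℕ}
    (IH : ∀ L M : List R, L.length ≤ n → (∀ a ∈ L, Irreducible a) → (∀ a ∈ M, Irreducible a) →
      L.prod = M.prod → SimPerm L M)
    {p q w : R} {L' M' : List R} (hq : Irreducible q)
    (hL' : ∀ a ∈ L', Irreducible a) (hM' : ∀ a ∈ M', Irreducible a)
    (hw : IsUnit w) (hp : p = q * w)
    (hprod : p * L'.prod = q * M'.prod)
    (hlen : L'.length ≤ n) : SimPerm (p :: L') (q :: M') := by
  have hq0 : q ≠ 0 := irreducible_ne_zero' hq
  have hpq : SimilarElements p q := similar_symm (hp ▸ similar_mul_unit hw)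
  have hML : M'.prod = w * L'.prod := by
    apply mul_left_cancel₀ hq0
    rw [← hprod, hp, mul_assoc]
  cases L' with
  | nil =>
    have : M' = [] := by
      apply eq_nil_of_prod_isUnit hM'
      rw [hML, List.prod_nil, mul_one]
      exact hw
    rw [this]
    exact simPerm_cons hpq simPerm_nil
  | cons p₂ L'' =>
    have hp₂ : Irreducible p₂ := hL' p₂ (List.mem_cons_self)
    have hL'' : ∀ a ∈ L'', Irreducible a := fun a ha => hL' a (List.mem_cons_of_mem _ ha)
    have hprod' : ((w * p₂) :: L'').prod = M'.prod := by
      rw [hML, List.prod_cons, List.prod_cons, ← mul_assoc]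
    have hwp₂ : Irreducible (w * p₂) := irreducible_unit_mul hw hp₂
    have IH1 : SimPerm ((w * p₂) :: L'') M' := by
      apply IH ((w * p₂) :: L'') M' _ _ hM' hprod'
      · simpa using hlen
      · intro a ha
        rcases List.mem_cons.mp ha with h | h
        · rw [h]; exact hwp₂
        · exact hL'' a h
    have c0 : SimPerm (p₂ :: L'') ((w * p₂) :: L'') :=
      simPerm_cons (similar_unit_mul hw) (simPerm_refl L'')
    exact simPerm_cons hpq (simPerm_trans c0 IH1)

/-- Uniqueness of factorizations up to permutation and similarity. -/
theorem DegreeSystem.unique (D : DegreeSystem R) :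
    ∀ L M : List R, (∀ a ∈ L, Irreducible a) → (∀ a ∈ M, Irreducible a) →
      L.prod = M.prod → SimPerm L M := by
  suffices H : ∀ n, ∀ L M : List R, L.length ≤ n → (∀ a ∈ L, Irreducible a) →
      (∀ a ∈ M, Irreducible a) → L.prod = M.prod → SimPerm L M by
    intro L M hL hM h
    exact H L.length L M le_rfl hL hM h
  intro n
  induction n with
  | zero =>
    intro L M hlen hL hM hprod
    have hLnil : L = [] := List.eq_nil_of_length_eq_zero (Nat.le_zero.mp hlen)
    subst hLnil
    have : M = [] := by
      apply eq_nil_of_prod_isUnit hM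
      rw [← hprod, List.prod_nil]
      exact isUnit_one
    rw [this]
    exact simPerm_nil
  | succ n IH =>
    intro L M hlen hL hM hprod
    cases L with
    | nil =>
      have : M = [] := by
        apply eq_nil_of_prod_isUnit hM
        rw [← hprod, List.prod_nil]
        exact isUnit_one
      rw [this]
      exact simPerm_nil
    | cons p L' =>
      cases M with
      | nil =>
        exfalso
        have : p :: L' = [] := by
          apply eq_nil_of_prod_isUnit hL
          rw [hprod, List.prod_nil]
          exact isUnit_one
        simp at this
      | cons q M' =>
        have hp : Irreducible p := hL p (List.mem_cons_self)
        have hq : Irreducible q := hM q (List.mem_cons_self)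
        have hL' : ∀ a ∈ L', Irreducible a := fun a ha => hL a (List.mem_cons_of_mem _ ha)
        have hM' : ∀ a ∈ M', Irreducible a := fun a ha => hM a (List.mem_cons_of_mem _ ha)
        have hp0 : p ≠ 0 := irreducible_ne_zero' hp
        have hq0 : q ≠ 0 := irreducible_ne_zero' hq
        have hprod' : p * L'.prod = q * M'.prod := by
          rw [List.prod_cons, List.prod_cons] at hprod
          exact hprod
        have hlen' : L'.length ≤ n := by simpa using hlen
        have hL'0 : L'.prod ≠ 0 := irreducible_prod_ne_zero hL'
        obtain ⟨d, p₁, q₁, u, v, s, t, hpd, hqd, hsum, hrel, hker⟩ :=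
          D.euclid p q hp0 hq0 ⟨L'.prod, M'.prod, hprod', mul_ne_zero hp0 hL'0⟩
        by_cases hd : IsUnit d
        · obtain ⟨du, hdu⟩ := hd
          have hco : p * (u * (↑du⁻¹ : R)) + q * (v * (↑du⁻¹ : R)) = 1 := by
            rw [← mul_assoc, ← mul_assoc, ← add_mul, hsum, ← hdu, Units.mul_inv]
          by_cases hs : IsUnit s
          · -- p = q * (t * s⁻¹) : branchB
            obtain ⟨su, hsu⟩ := hs
            have hpqw : p = q * (t * (↑su⁻¹ : R)) := by
              rw [← mul_assoc, ← hrel, ← hsu, mul_assoc, Units.mul_inv, mul_one]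
            have hwu : IsUnit (t * (↑su⁻¹ : R)) := by
              rcases hp.isUnit_or_isUnit hpqw with h | h
              · exact absurd h hq.not_isUnit
              · exact h
            exact branchB IH hq hL' hM' hwu hpqw hprod' hlen'
          by_cases ht : IsUnit t
          · -- q = p * (s * t⁻¹) : branchA
            obtain ⟨tu, htu⟩ := ht
            have hqpw : q = p * (s * (↑tu⁻¹ : R)) := by
              rw [← mul_assoc, hrel, ← htu, mul_assoc, Units.mul_inv, mul_one]
            have hwu : IsUnit (s * (↑tu⁻¹ : R)) := by
              rcases hq.isUnit_or_isUnit hqpw with h | h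
              · exact absurd h hp.not_isUnit
              · exact h
            exact branchA IH hp hL' hM' hwu hqpw hprod' hlen'
          · -- the genuinely comaximal case
            obtain ⟨r, hr1, hr2⟩ := hker L'.prod M'.prod hprod'
            have hsim_sq : SimilarElements s q := similar_of_comaximal hrel hco hker
            have hsim_tp : SimilarElements t p := by
              apply similar_of_comaximal (p := q) (q := p) (u := v * (↑du⁻¹ : R))
                (v := u * (↑du⁻¹ : R)) hrel.symm
              · rw [add_comm]; exact hco
              · intro x y hxy
                obtain ⟨r', h1, h2⟩ := hker y x hxy.symm
                exact ⟨r', h2, h1⟩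
            have hs_irr : Irreducible s := irreducible_of_similar D hq (similar_symm hsim_sq)
            have ht_irr : Irreducible t := irreducible_of_similar D hp (similar_symm hsim_tp)
            have hr0 : r ≠ 0 := by
              intro h
              rw [h, mul_zero] at hr1
              exact hL'0 hr1
            -- get common tail lists
            obtain ⟨s₀, t₀, rlist, hsl_atoms, htl_atoms, hslprod, htlprod, hsim_s₀, hsim_t₀⟩ :
                ∃ (s₀ t₀ : R) (rlist : List R),
                  (∀ a ∈ (s₀ :: rlist), Irreducible a) ∧ (∀ a ∈ (t₀ :: rlist), Irreducible a) ∧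
                  L'.prod = (s₀ :: rlist).prod ∧ M'.prod = (t₀ :: rlist).prod ∧
                  SimilarElements s₀ q ∧ SimilarElements p t₀ := by
              by_cases hru : IsUnit r
              · refine ⟨s * r, t * r, [], ?_, ?_, ?_, ?_, ?_, ?_⟩
                · intro a ha
                  rcases List.mem_cons.mp ha with h | h
                  · rw [h]; exact irreducible_mul_unit hru hs_irr
                  · simp at h
                · intro a ha
                  rcases List.mem_cons.mp ha with h | h
                  · rw [h]; exact irreducible_mul_unit hru ht_irr
                  · simp at h
                · rw [hr1]; simp
                · rw [hr2]; simp
                · exact similar_trans (similar_symm (similar_mul_unit hru)) hsim_sq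
                · exact similar_trans (similar_symm hsim_tp) (similar_mul_unit hru)
              · obtain ⟨rlist, hrl_atoms, hrl_prod⟩ := D.factor r hr0 hru
                refine ⟨s, t, rlist, ?_, ?_, ?_, ?_, hsim_sq, similar_symm hsim_tp⟩
                · intro a ha
                  rcases List.mem_cons.mp ha with h | h
                  · rw [h]; exact hs_irr
                  · exact hrl_atoms a h
                · intro a ha
                  rcases List.mem_cons.mp ha with h | h
                  · rw [h]; exact ht_irr
                  · exact hrl_atoms a h
                · rw [hr1, List.prod_cons, hrl_prod]
                · rw [hr2, List.prod_cons, hrl_prod]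
            have IH1 : SimPerm L' (s₀ :: rlist) := IH L' (s₀ :: rlist) hlen' hL' hsl_atoms hslprod
            have hlent : (t₀ :: rlist).length ≤ n := by
              have h1 := simPerm_length IH1
              have h2 : (t₀ :: rlist).length = (s₀ :: rlist).length := by simp
              omega
            have IH2 : SimPerm (t₀ :: rlist) M' := IH (t₀ :: rlist) M' hlent htl_atoms hM'
              htlprod.symm
            have c1 : SimPerm (p :: L') (t₀ :: s₀ :: rlist) := simPerm_cons hsim_t₀ IH1
            have c2 : SimPerm (t₀ :: s₀ :: rlist) (s₀ :: t₀ :: rlist) := simPerm_swap t₀ s₀ rlist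
            have c3 : SimPerm (s₀ :: t₀ :: rlist) (q :: M') := simPerm_cons hsim_s₀ IH2
            exact simPerm_trans (simPerm_trans c1 c2) c3
        · -- d is not a unit: p₁ and q₁ are units, q = p * w
          have hp₁ : IsUnit p₁ := by
            rcases hp.isUnit_or_isUnit hpd with h | h
            · exact absurd h hd
            · exact h
          have hq₁ : IsUnit q₁ := by
            rcases hq.isUnit_or_isUnit hqd with h | h
            · exact absurd h hd
            · exact h
          obtain ⟨pu, hpu⟩ := hp₁
          have hdp : d = p * (↑pu⁻¹ : R) := by
            rw [hpd, ← hpu, mul_assoc, Units.mul_inv, mul_one]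
          have hqpw : q = p * ((↑pu⁻¹ : R) * q₁) := by
            rw [hqd, hdp, mul_assoc]
          have hwu : IsUnit ((↑pu⁻¹ : R) * q₁) := (Units.isUnit pu⁻¹).mul hq₁
          exact branchA IH hp hL' hM' hwu hqpw hprod' hlen'

end Main
section MAdeg
variable {K : Type*} [Field K] {X : Type*}

open Finsupp

namespace FreeAlgAux

/-- length of a word -/
def ℓ (w : FreeMonoid X) : ℕ := w.toList.length

theorem ℓ_mul (u v : FreeMonoid X) : ℓ (u * v) = ℓ u + ℓ v := by
  simp [ℓ, FreeMonoid.toList_mul]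

theorem toList_injective : Function.Injective (FreeMonoid.toList (α := X)) := by
  intro u v h
  have := congrArg FreeMonoid.ofList h
  rwa [FreeMonoid.ofList_toList, FreeMonoid.ofList_toList] at this

/-- the degree (maximum word length in the support) -/
def degM (f : MonoidAlgebra K (FreeMonoid X)) : ℕ := f.coeff.support.sup fun w => ℓ w

theorem le_degM {f : MonoidAlgebra K (FreeMonoid X)} {w : FreeMonoid X}
    (hw : w ∈ f.coeff.support) : ℓ w ≤ degM f := Finset.le_sup hw

theorem exists_degM {f : MonoidAlgebra K (FreeMonoid X)} (hf : f ≠ 0) :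
    ∃ w ∈ f.coeff.support, ℓ w = degM f := by
  obtain ⟨w, hw, hsup⟩ := Finset.exists_mem_eq_sup f.coeff.support
    (Finsupp.support_nonempty_iff.mpr (MonoidAlgebra.coeff_eq_zero.not.mpr hf)) fun w => ℓ w
  exact ⟨w, hw, hsup.symm⟩

theorem mul_apply_unique (f g : MonoidAlgebra K (FreeMonoid X)) (w u₀ v₀ : FreeMonoid X)
    (hw : u₀ * v₀ = w)
    (huniq : ∀ u ∈ f.coeff.support, ∀ v ∈ g.coeff.support, u * v = w → u = u₀ ∧ v = v₀) :
    (f * g).coeff w = f.coeff u₀ * g.coeff v₀ := by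
  classical
  rw [MonoidAlgebra.coeff_mul]
  by_cases hu₀ : u₀ ∈ f.coeff.support ∧ v₀ ∈ g.coeff.support
  · rw [Finsupp.sum, Finset.sum_eq_single u₀]
    · rw [Finsupp.sum, Finset.sum_eq_single v₀]
      · rw [if_pos hw]
      · intro v hv hne; rw [if_neg]; intro h; exact hne (huniq u₀ hu₀.1 v hv h).2
      · intro h; exact absurd hu₀.2 h
    · intro u hu hne
      rw [Finsupp.sum]
      apply Finset.sum_eq_zero
      intro v hv
      rw [if_neg]; intro h; exact hne (huniq u hu v hv h).1
    · intro h; exact absurd hu₀.1 h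
  · have hrhs : f.coeff u₀ * g.coeff v₀ = 0 := by
      rcases not_and_or.mp hu₀ with h | h
      · rw [Finsupp.notMem_support_iff.mp h, zero_mul]
      · rw [Finsupp.notMem_support_iff.mp h, mul_zero]
    rw [hrhs, Finsupp.sum]
    apply Finset.sum_eq_zero; intro u hu
    rw [Finsupp.sum]; apply Finset.sum_eq_zero; intro v hv
    rw [if_neg]; intro h
    obtain ⟨h1, h2⟩ := huniq u hu v hv h
    exact hu₀ ⟨h1 ▸ hu, h2 ▸ hv⟩

theorem mul_apply_zero (f g : MonoidAlgebra K (FreeMonoid X)) (w : FreeMonoid X)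
    (h : ∀ u ∈ f.coeff.support, ∀ v ∈ g.coeff.support, u * v ≠ w) : (f * g).coeff w = 0 := by
  classical
  rw [MonoidAlgebra.coeff_mul, Finsupp.sum]
  apply Finset.sum_eq_zero; intro u hu
  rw [Finsupp.sum]; apply Finset.sum_eq_zero; intro v hv
  rw [if_neg (h u hu v hv)]

/-- words split uniquely when the length of the first part is prescribed -/
theorem split_words {u v u' v' : FreeMonoid X} (h : u * v = u' * v') (hl : ℓ u = ℓ u') :
    u = u' ∧ v = v' := by
  have hcat := congrArg FreeMonoid.toList h
  rw [FreeMonoid.toList_mul, FreeMonoid.toList_mul] at hcat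
  obtain ⟨h1, h2⟩ := List.append_inj hcat hl
  exact ⟨toList_injective h1, toList_injective h2⟩

theorem mul_degM {f g : MonoidAlgebra K (FreeMonoid X)} (hf : f ≠ 0) (hg : g ≠ 0) :
    f * g ≠ 0 ∧ degM (f * g) = degM f + degM g := by
  classical
  obtain ⟨u₀, hu₀, hu₀l⟩ := exists_degM hf
  obtain ⟨v₀, hv₀, hv₀l⟩ := exists_degM hg
  have hcoeff : (f * g).coeff (u₀ * v₀) = f.coeff u₀ * g.coeff v₀ := by
    apply mul_apply_unique f g (u₀ * v₀) u₀ v₀ rfl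
    intro u hu v hv huv
    have h1 : ℓ u ≤ degM f := le_degM hu
    have h2 : ℓ v ≤ degM g := le_degM hv
    have h3 : ℓ u + ℓ v = degM f + degM g := by
      rw [← ℓ_mul, huv, ℓ_mul, hu₀l, hv₀l]
    exact split_words huv (by omega)
  have hne : (f * g).coeff (u₀ * v₀) ≠ 0 := by
    rw [hcoeff]
    exact mul_ne_zero (Finsupp.mem_support_iff.mp hu₀) (Finsupp.mem_support_iff.mp hv₀)
  have hfg : f * g ≠ 0 := fun h => hne (by rw [h]; rfl)
  refine ⟨hfg, le_antisymm ?_ ?_⟩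
  · apply Finset.sup_le
    intro w hw
    have := MonoidAlgebra.support_coeff_mul_subset f g hw
    rw [Finset.mem_mul] at this
    obtain ⟨u, hu, v, hv, rfl⟩ := this
    rw [ℓ_mul]
    exact add_le_add (le_degM hu) (le_degM hv)
  · have : u₀ * v₀ ∈ (f * g).coeff.support := Finsupp.mem_support_iff.mpr hne
    have h4 := le_degM this
    rw [ℓ_mul, hu₀l, hv₀l] at h4
    exact h4

theorem homog_mul_apply (f g : MonoidAlgebra K (FreeMonoid X)) (n : ℕ)
    (hf : ∀ u ∈ f.coeff.support, ℓ u = n) (w : FreeMonoid X) :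
    (f * g).coeff w = if n ≤ ℓ w
      then f.coeff (FreeMonoid.ofList (w.toList.take n)) * g.coeff (FreeMonoid.ofList (w.toList.drop n))
      else 0 := by
  classical
  split_ifs with hn
  · apply mul_apply_unique
    · apply toList_injective
      rw [FreeMonoid.toList_mul, FreeMonoid.toList_ofList, FreeMonoid.toList_ofList]
      exact List.take_append_drop n w.toList
    · intro u hu v hv huv
      have hul : ℓ u = n := hf u hu
      have hcat := congrArg FreeMonoid.toList huv
      rw [FreeMonoid.toList_mul] at hcat
      constructor
      · apply toList_injective
        rw [FreeMonoid.toList_ofList, ← hcat, ← hul]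
        exact (List.take_left' rfl).symm
      · apply toList_injective
        rw [FreeMonoid.toList_ofList, ← hcat, ← hul]
        exact (List.drop_left' rfl).symm
  · apply mul_apply_zero
    intro u hu v _ huv
    apply hn
    rw [← huv, ℓ_mul, hf u hu]
    omega

/-- the homogeneous component of degree n -/
def comp (n : ℕ) (f : MonoidAlgebra K (FreeMonoid X)) : MonoidAlgebra K (FreeMonoid X) :=
  MonoidAlgebra.ofCoeff (f.coeff.filter (fun w => ℓ w = n))

theorem comp_apply (n : ℕ) (f : MonoidAlgebra K (FreeMonoid X)) (w : FreeMonoid X) :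
    (comp n f).coeff w = if ℓ w = n then f.coeff w else 0 := by
  classical
  exact Finsupp.filter_apply _ f.coeff w

theorem comp_homog (n : ℕ) (f : MonoidAlgebra K (FreeMonoid X)) :
    ∀ u ∈ (comp n f).coeff.support, ℓ u = n := by
  intro u hu
  rw [Finsupp.mem_support_iff, comp_apply] at hu
  by_contra h
  rw [if_neg h] at hu
  exact hu rfl

theorem comp_self {n : ℕ} {f : MonoidAlgebra K (FreeMonoid X)}
    (hf : ∀ u ∈ f.coeff.support, ℓ u = n) : comp n f = f := by
  classical
  ext w
  rw [comp_apply]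
  split_ifs with h
  · rfl
  · by_contra h2
    exact h (hf w (Finsupp.mem_support_iff.mpr fun hc => h2 hc.symm))

theorem comp_top_ne {f : MonoidAlgebra K (FreeMonoid X)} (hf : f ≠ 0) :
    comp (degM f) f ≠ 0 := by
  obtain ⟨w, hw, hwl⟩ := exists_degM hf
  intro h
  have : (comp (degM f) f).coeff w = f.coeff w := by rw [comp_apply, if_pos hwl]
  rw [h] at this
  exact Finsupp.mem_support_iff.mp hw this.symm

theorem homog_degM {f : MonoidAlgebra K (FreeMonoid X)} {n : ℕ} (hf : f ≠ 0)
    (h : ∀ u ∈ f.coeff.support, ℓ u = n) : degM f = n := by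
  obtain ⟨w, hw, hwl⟩ := exists_degM hf
  rw [← hwl, h w hw]

theorem mul_apply_top (f g : MonoidAlgebra K (FreeMonoid X)) (w : FreeMonoid X)
    (hw : ℓ w = degM f + degM g) :
    (f * g).coeff w = (comp (degM f) f * comp (degM g) g).coeff w := by
  classical
  have hw' : w.toList.length = degM f + degM g := hw
  have hn : degM f ≤ ℓ w := by
    show degM f ≤ w.toList.length
    omega
  have htake : ℓ (FreeMonoid.ofList (w.toList.take (degM f))) = degM f := by
    simp only [ℓ, FreeMonoid.toList_ofList, List.length_take]
    omega
  have hdrop : ℓ (FreeMonoid.ofList (w.toList.drop (degM f))) = degM g := by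
    simp only [ℓ, FreeMonoid.toList_ofList, List.length_drop]
    omega
  clear hw'
  
  have hsplit : FreeMonoid.ofList (w.toList.take (degM f)) *
      FreeMonoid.ofList (w.toList.drop (degM f)) = w := by
    apply toList_injective
    rw [FreeMonoid.toList_mul, FreeMonoid.toList_ofList, FreeMonoid.toList_ofList]
    exact List.take_append_drop _ w.toList
  have LHS : (f * g).coeff w = f.coeff (FreeMonoid.ofList (w.toList.take (degM f))) *
      g.coeff (FreeMonoid.ofList (w.toList.drop (degM f))) := by
    apply mul_apply_unique f g w _ _ hsplit
    intro u hu v hv huv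
    have h1 : ℓ u ≤ degM f := le_degM hu
    have h2 : ℓ v ≤ degM g := le_degM hv
    have h3 : ℓ u + ℓ v = ℓ w := by rw [← ℓ_mul, huv]
    have h4 : ℓ u = degM f := by omega
    exact split_words (by rw [huv, hsplit]) (by rw [h4, htake])
  have RHS : (comp (degM f) f * comp (degM g) g).coeff w =
      (comp (degM f) f).coeff (FreeMonoid.ofList (w.toList.take (degM f))) *
      (comp (degM g) g).coeff (FreeMonoid.ofList (w.toList.drop (degM f))) := by
    rw [homog_mul_apply _ _ (degM f) (comp_homog _ _) w, if_pos hn]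
  rw [LHS, RHS, comp_apply, comp_apply, if_pos htake, if_pos hdrop]

theorem homog_mul_zero {f g : MonoidAlgebra K (FreeMonoid X)} {n₁ n₂ : ℕ}
    (hf : ∀ u ∈ f.coeff.support, ℓ u = n₁) (hg : ∀ u ∈ g.coeff.support, ℓ u = n₂)
    {w : FreeMonoid X} (hw : ℓ w ≠ n₁ + n₂) : (f * g).coeff w = 0 := by
  apply mul_apply_zero
  intro u hu v hv huv
  apply hw
  rw [← huv, ℓ_mul, hf u hu, hg v hv]

/-- the division lemma in the monoid algebra -/
theorem ma_div (a b x y : MonoidAlgebra K (FreeMonoid X)) (h : a * x = b * y)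
    (hne : a * x ≠ 0) (hord : degM b ≤ degM a) :
    ∃ c, a - b * c = 0 ∨ degM (a - b * c) < degM a := by
  classical
  have ha0 : a ≠ 0 := fun h' => hne (by rw [h', zero_mul])
  have hx0 : x ≠ 0 := fun h' => hne (by rw [h', mul_zero])
  have hb0 : b ≠ 0 := fun h' => hne (by rw [h, h', zero_mul])
  have hy0 : y ≠ 0 := fun h' => hne (by rw [h, h', mul_zero])
  set m := degM a with hm
  set n := degM b with hn
  set A := comp m a with hA
  set B := comp n b with hB
  set X' := comp (degM x) x with hX'
  set Y' := comp (degM y) y with hY'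
  have hN : m + degM x = n + degM y := by
    have h1 := (mul_degM ha0 hx0).2
    have h2 := (mul_degM hb0 hy0).2
    rw [h] at h1
    omega
  have hstep1 : A * X' = B * Y' := by
    ext w
    by_cases hℓ : ℓ w = m + degM x
    · rw [hA, hX', ← mul_apply_top a x w hℓ, h, mul_apply_top b y w (by omega)]
    · rw [homog_mul_zero (comp_homog _ _) (comp_homog _ _) hℓ,
        homog_mul_zero (comp_homog _ _) (comp_homog _ _) (by omega)]
  have hB0 : B ≠ 0 := comp_top_ne hb0
  have hX'0 : X' ≠ 0 := comp_top_ne hx0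
  have hA0 : A ≠ 0 := comp_top_ne ha0
  obtain ⟨w₀, hw₀⟩ := Finsupp.support_nonempty_iff.mpr (MonoidAlgebra.coeff_eq_zero.not.mpr hB0)
  have hw₀n : ℓ w₀ = n := comp_homog _ _ w₀ hw₀
  have hinj : Function.Injective (fun v : FreeMonoid X => w₀ * v) := by
    intro v₁ v₂ hv
    apply toList_injective
    have := congrArg FreeMonoid.toList hv
    rw [FreeMonoid.toList_mul, FreeMonoid.toList_mul] at this
    exact List.append_cancel_left this
  set CW : MonoidAlgebra K (FreeMonoid X) :=
    MonoidAlgebra.ofCoeff (Finsupp.comapDomain (fun v => w₀ * v) A.coeff (hinj.injOn)) with hCWdef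
  have hCWapp : ∀ v, CW.coeff v = A.coeff (w₀ * v) := fun v => rfl
  have hCWhomog : ∀ u ∈ CW.coeff.support, ℓ u = m - n := by
    intro u hu
    rw [Finsupp.mem_support_iff, hCWapp] at hu
    have : w₀ * u ∈ A.coeff.support := Finsupp.mem_support_iff.mpr hu
    have h2 := comp_homog m a _ this
    rw [ℓ_mul, hw₀n] at h2
    omega
  -- key pointwise identity
  have hstep3 : ∀ z : FreeMonoid X, B.coeff w₀ * Y'.coeff z = (CW * X').coeff z := by
    intro z
    have e1 : (B * Y').coeff (w₀ * z) = B.coeff w₀ * Y'.coeff z := by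
      rw [homog_mul_apply B Y' n (comp_homog _ _) (w₀ * z), if_pos (by rw [ℓ_mul, hw₀n]; omega)]
      congr 2
      · apply toList_injective
        rw [FreeMonoid.toList_ofList, FreeMonoid.toList_mul]
        exact List.take_left' hw₀n
      · apply toList_injective
        rw [FreeMonoid.toList_ofList, FreeMonoid.toList_mul]
        exact List.drop_left' hw₀n
    have e2 : (A * X').coeff (w₀ * z) = (CW * X').coeff z := by
      rw [homog_mul_apply A X' m (comp_homog _ _) (w₀ * z),
        homog_mul_apply CW X' (m - n) hCWhomog z]
      have hiff : m ≤ ℓ (w₀ * z) ↔ m - n ≤ ℓ z := by rw [ℓ_mul, hw₀n]; omega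
      by_cases hc : m - n ≤ ℓ z
      · rw [if_pos (hiff.mpr hc), if_pos hc, hCWapp]
        have h9 : (FreeMonoid.toList w₀).length = n := hw₀n
        have hlen : m = (FreeMonoid.toList w₀).length + (m - n) := by rw [h9]; omega
        have htake : FreeMonoid.ofList ((w₀ * z).toList.take m) =
            w₀ * FreeMonoid.ofList (z.toList.take (m - n)) := by
          apply toList_injective
          simp only [FreeMonoid.toList_ofList, FreeMonoid.toList_mul]
          conv_lhs => rw [hlen]
          exact List.take_length_add_append (m - n)
        have hdrop : FreeMonoid.ofList ((w₀ * z).toList.drop m) =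
            FreeMonoid.ofList (z.toList.drop (m - n)) := by
          congr 1
          simp only [FreeMonoid.toList_mul]
          conv_lhs => rw [hlen]
          exact List.drop_length_add_append (m - n)
        rw [htake, hdrop]
      · rw [if_neg (fun hc2 => hc (hiff.mp hc2)), if_neg hc]
    rw [← e2, hstep1, e1]
  -- conclude Y' = C * X'
  have hBw₀ : B.coeff w₀ ≠ 0 := Finsupp.mem_support_iff.mp hw₀
  set C : MonoidAlgebra K (FreeMonoid X) := (B.coeff w₀)⁻¹ • CW with hCdef
  have hYC : Y' = C * X' := by
    ext z
    rw [hCdef, smul_mul_assoc, MonoidAlgebra.coeff_smul_apply, ← hstep3 z, smul_eq_mul, ← mul_assoc,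
      inv_mul_cancel₀ hBw₀, one_mul]
  have hABC : A = B * C := by
    have h5 : (A - B * C) * X' = 0 := by
      rw [sub_mul, mul_assoc, ← hYC, ← hstep1, sub_self]
    by_contra hne'
    have : A - B * C ≠ 0 := fun h6 => hne' (by rw [← sub_eq_zero]; exact h6)
    exact (mul_degM this hX'0).1 h5
  -- C is homogeneous of degree m - n
  have hChomog : ∀ u ∈ C.coeff.support, ℓ u = m - n := by
    intro u hu
    apply hCWhomog
    rw [Finsupp.mem_support_iff] at hu ⊢
    intro h6
    rw [hCdef, MonoidAlgebra.coeff_smul_apply, h6, smul_zero] at hu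
    exact hu rfl
  have hC0 : C ≠ 0 := by
    intro h6
    rw [h6, mul_zero] at hABC
    exact hA0 hABC
  have hCdeg : degM C = m - n := homog_degM hC0 hChomog
  -- coefficients of a - b * C vanish in degree m
  refine ⟨C, ?_⟩
  have hbC : ∀ w : FreeMonoid X, ℓ w = m → (a - b * C).coeff w = 0 := by
    intro w hw
    have h7 : (b * C).coeff w = (B * C).coeff w := by
      have h7a := mul_apply_top b C w (by rw [hCdeg, ← hn]; omega)
      rw [hCdeg, ← hn] at h7a
      rw [h7a, comp_self hChomog, ← hB]
    have h8 : (B * C).coeff w = a.coeff w := by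
      rw [← hABC, hA, comp_apply, if_pos hw]
    rw [MonoidAlgebra.coeff_sub, Finsupp.sub_apply, h7, h8, sub_self]
  by_cases hD : a - b * C = 0
  · exact Or.inl hD
  · right
    have hsupp : ∀ w ∈ (a - b * C).coeff.support, ℓ w < m := by
      intro w hw
      have hw0 : (a - b * C).coeff w ≠ 0 := Finsupp.mem_support_iff.mp hw
      have hwm : ℓ w ≠ m := fun h6 => hw0 (hbC w h6)
      have hsub := Finsupp.support_sub (f := a.coeff) (g := (b * C).coeff) hw
      rw [Finset.mem_union] at hsub
      have hbCdeg : degM (b * C) = m := by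
        rw [(mul_degM hb0 hC0).2, hCdeg, ← hn]; omega
      rcases hsub with h6 | h6
      · have := le_degM h6; omega
      · have := le_degM h6; rw [hbCdeg] at this; omega
    have hm0 : 0 < m := by
      obtain ⟨w, hw⟩ := Finsupp.support_nonempty_iff.mpr (MonoidAlgebra.coeff_eq_zero.not.mpr hD)
      have := hsupp w hw
      omega
    exact Finset.sup_lt_iff hm0 |>.mpr hsupp

theorem ma_unit (a : MonoidAlgebra K (FreeMonoid X)) (h0 : a ≠ 0) (hd : degM a = 0) :
    IsUnit a := by
  classical
  have hsupp : a.coeff.support ⊆ {1} := by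
    intro w hw
    have h1 : ℓ w ≤ 0 := hd ▸ le_degM hw
    have h2 : w.toList = [] := List.length_eq_zero_iff.mp (Nat.le_zero.mp h1)
    rw [Finset.mem_singleton]
    apply toList_injective
    rw [h2]
    rfl
  have ha : a = MonoidAlgebra.single 1 (a.coeff 1) := by
    apply MonoidAlgebra.coeff_injective
    rw [MonoidAlgebra.coeff_single, Finsupp.eq_single_iff]
    exact ⟨hsupp, rfl⟩
  have hk : a.coeff 1 ≠ 0 := by
    intro h1
    apply h0
    rw [ha, h1]
    simp
  have h1 : a * MonoidAlgebra.single 1 (a.coeff 1)⁻¹ = 1 := by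
    nth_rewrite 1 [ha]
    rw [MonoidAlgebra.single_mul_single, mul_one, mul_inv_cancel₀ hk, MonoidAlgebra.one_def]
  have h2 : MonoidAlgebra.single 1 (a.coeff 1)⁻¹ * a = 1 := by
    nth_rewrite 2 [ha]
    rw [MonoidAlgebra.single_mul_single, mul_one, inv_mul_cancel₀ hk, MonoidAlgebra.one_def]
  exact ⟨⟨a, MonoidAlgebra.single 1 (a.coeff 1)⁻¹, h1, h2⟩, rfl⟩

end FreeAlgAux

end MAdeg
section Final
open FreeAlgAux

/-- The free associative algebra is a similarity unique factorization domain: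
it is atomic and factorizations into atoms are unique up to permutation and
similarity of the factors. -/
theorem freeAlgebra_similarity_UFD {K X : Type*} [Field K] :
    (∀ p : FreeAlgebra K X, p ≠ 0 → ¬ IsUnit p →
      ∃ L : List (FreeAlgebra K X), (∀ a ∈ L, Irreducible a) ∧ L.prod = p) ∧
    (∀ L M : List (FreeAlgebra K X),
      (∀ a ∈ L, Irreducible a) → (∀ a ∈ M, Irreducible a) →
      L.prod = M.prod →
      L.length = M.length ∧
        ∃ σ : Fin L.length ≃ Fin M.length,
          ∀ i, SimilarElements (L.get i) (M.get (σ i))) := by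
  classical
  set e : FreeAlgebra K X ≃ₐ[K] MonoidAlgebra K (FreeMonoid X) :=
    FreeAlgebra.equivMonoidAlgebraFreeMonoid with he
  have e_zero : ∀ p : FreeAlgebra K X, e p = 0 ↔ p = 0 := by
    intro p
    constructor
    · intro h
      have := congrArg e.symm h
      rwa [AlgEquiv.symm_apply_apply, map_zero] at this
    · rintro rfl; exact map_zero _
  haveI : NoZeroDivisors (FreeAlgebra K X) := by
    constructor
    intro a b hab
    by_contra hcon
    push_neg at hcon
    obtain ⟨ha, hb⟩ := hcon
    have h1 : e a * e b = 0 := by rw [← map_mul, hab, map_zero]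
    exact (mul_degM ((not_iff_not.mpr (e_zero a)).mpr ha)
      ((not_iff_not.mpr (e_zero b)).mpr hb)).1 h1
  set D : DegreeSystem (FreeAlgebra K X) :=
    { deg := fun p => degM (e p)
      deg_mul := by
        intro a b ha hb
        show degM (e (a * b)) = degM (e a) + degM (e b)
        rw [map_mul]
        exact (mul_degM ((not_iff_not.mpr (e_zero a)).mpr ha)
          ((not_iff_not.mpr (e_zero b)).mpr hb)).2
      isUnit_of_deg := by
        intro a ha hd
        have := ma_unit (e a) ((not_iff_not.mpr (e_zero a)).mpr ha) hd
        obtain ⟨u, hu⟩ := this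
        have : IsUnit (e.symm (e a)) := by
          rw [← hu]
          exact (Units.isUnit u).map e.symm.toAlgHom.toRingHom.toMonoidHom
        rwa [AlgEquiv.symm_apply_apply] at this
      div := by
        intro a b x y h hne hord
        have h1 : e a * e x = e b * e y := by rw [← map_mul, ← map_mul, h]
        have h2 : e a * e x ≠ 0 := by
          rw [← map_mul]
          exact (not_iff_not.mpr (e_zero (a * x))).mpr hne
        obtain ⟨C, hC⟩ := ma_div (e a) (e b) (e x) (e y) h1 h2 hord
        refine ⟨e.symm C, ?_⟩
        have h3 : e (a - b * e.symm C) = e a - e b * C := by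
          rw [map_sub, map_mul, AlgEquiv.apply_symm_apply]
        rcases hC with h4 | h4
        · left
          rw [← e_zero, h3, h4]
        · right
          show degM (e (a - b * e.symm C)) < degM (e a)
          rw [h3]
          exact h4 } with hD
  constructor
  · exact D.factor
  · intro L M hL hM hprod
    obtain ⟨σ, hσ⟩ := D.unique L M hL hM hprod
    exact ⟨simPerm_length ⟨σ, hσ⟩, σ, hσ⟩

end Final
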